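/- Let b₁, b₂, b₃ be real numbers, let g(x) = x³ + b₁x² + b₂x + b₃, and let D(g) = 18·b₁·b₂·b₃ + b₁²·b₂² − 4·b₁³·b₃ − 4·b₂³ − 27·b₃². If D(g) < 0, b₁ ≥ 0, b₂ ≥ 0, b₃ > 0, and 0 < α < 2/3, then every complex root z of g satisfies |arg(z)| > α·π/2. -/

import Mathlib

/-- Fractional Routh–Hurwitz case (ii) for the cubic `g(x) = x³ + b₁x² + b₂x + b₃`:
if `D(g) < 0`, `b₁ ≥ 0`, `b₂ ≥ 0`, `b₃ > 0`, and `0 < α < 2/3`, then every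
complex root `z` of `g` satisfies `|arg z| > α·π/2`. -/
theorem cubic_stable_case_ii (b₁ b₂ b₃ α : ℝ)
    (hD : 18 * b₁ * b₂ * b₃ + b₁ ^ 2 * b₂ ^ 2 - 4 * b₁ ^ 3 * b₃
            - 4 * b₂ ^ 3 - 27 * b₃ ^ 2 < 0)
    (hb₁ : 0 ≤ b₁) (hb₂ : 0 ≤ b₂) (hb₃ : 0 < b₃)
    (hα₀ : 0 < α) (hα : α < 2 / 3) :
    ∀ z : ℂ, z ^ 3 + (b₁ : ℂ) * z ^ 2 + (b₂ : ℂ) * z + (b₃ : ℂ) = 0 →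
      α * Real.pi / 2 < |z.arg| := by
  intro z hz
  have hπ := Real.pi_pos
  have hz0 : z ≠ 0 := by
    rintro rfl
    simp at hz
    exact absurd hz (by exact_mod_cast hb₃.ne')
  set x := z.re with hx
  set y := z.im with hy
  have hre : x^3 - 3*x*y^2 + b₁*(x^2 - y^2) + b₂*x + b₃ = 0 := by
    have h := congrArg Complex.re hz
    simp [pow_succ, Complex.add_re, Complex.mul_re, Complex.mul_im] at h
    ring_nf at h ⊢
    linarith
  have him : y * (3*x^2 - y^2 + 2*b₁*x + b₂) = 0 := by
    have h := congrArg Complex.im hz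
    simp [pow_succ, Complex.add_im, Complex.mul_re, Complex.mul_im] at h
    ring_nf at h ⊢
    linarith
  have hcut : α * Real.pi / 2 < Real.pi / 3 := by nlinarith
  by_cases hy0 : y = 0
  · have hxneg : x < 0 := by
      by_contra h
      push_neg at h
      rw [hy0] at hre
      nlinarith [pow_nonneg h 3, mul_nonneg hb₁ (sq_nonneg x), mul_nonneg hb₂ h]
    have harg : z.arg = Real.pi := Complex.arg_eq_pi_iff.mpr ⟨hxneg, hy0⟩
    rw [harg, abs_of_pos hπ]
    linarith
  · have hy2 : y^2 = 3*x^2 + 2*b₁*x + b₂ := by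
      rcases mul_eq_zero.mp him with h | h
      · exact absurd h hy0
      · linarith
    have habs0 : 0 < ‖z‖ := norm_pos_iff.mpr hz0
    have hcos : Real.cos z.arg ≤ 1/2 := by
      rw [Complex.cos_arg hz0, div_le_iff₀ habs0]
      rcases le_or_gt x 0 with h | h
      · nlinarith
      · have h4 : (2*x)^2 ≤ x^2 + y^2 := by nlinarith [mul_nonneg hb₁ h.le]
        have habsq : ‖z‖ = Real.sqrt (x^2 + y^2) := by
          rw [Complex.norm_def, Complex.normSq_apply]; congr 1; ring
        have h5 : 2*x ≤ ‖z‖ := by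
          rw [habsq]
          rw [Real.le_sqrt (by linarith) (by positivity)]
          nlinarith
        linarith
    by_contra hcon
    push_neg at hcon
    have h1 : |z.arg| < Real.pi/3 := lt_of_le_of_lt hcon hcut
    have h2 : Real.cos (Real.pi/3) < Real.cos |z.arg| :=
      Real.cos_lt_cos_of_nonneg_of_le_pi (abs_nonneg _) (by linarith) h1
    rw [Real.cos_pi_div_three, Real.cos_abs] at h2
    linarith
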